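/- arXiv:1403.0159 — 3 statements merged into one kernel-verified Lean document; each statement's English description precedes it below -/
import Mathlib

section
/- For positive integers i ≠ j with 𝐢 = i/gcd(i,j) and 𝐣 = j/gcd(i,j), we have (4/π²)·(2 + Σ_{m=2,4,...} 4/((m²𝐢²-1)(m²𝐣²-1))) = (8/π²)·(𝐢²/(𝐢²-𝐣²)·(π/(2𝐢))·cot(π/(2𝐢)) - 𝐣²/(𝐢²-𝐣²)·(π/(2𝐣))·cot(π/(2𝐣))). -/
open Complex Real


lemma key_integral (z : ℝ) (n : ℤ) (h : (z:ℂ)^2 - (n:ℂ)^2 ≠ 0) :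
    ∫ x in (-π:ℝ)..π, Complex.exp (-(n:ℂ) * x * Complex.I) * Complex.cos ((z:ℂ) * x)
      = (Complex.exp (-(n:ℂ) * π * Complex.I) * (-(n:ℂ) * Complex.I * Complex.cos ((z:ℂ)*π)
          + (z:ℂ) * Complex.sin ((z:ℂ)*π))
        - Complex.exp ((n:ℂ) * π * Complex.I) * (-(n:ℂ) * Complex.I * Complex.cos ((z:ℂ)*π)
          - (z:ℂ) * Complex.sin ((z:ℂ)*π))) / ((z:ℂ)^2 - (n:ℂ)^2) := by
  set G : ℂ → ℂ := fun w =>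
    Complex.exp (-(n:ℂ) * w * Complex.I) *
      (-(n:ℂ) * Complex.I * Complex.cos ((z:ℂ) * w) + (z:ℂ) * Complex.sin ((z:ℂ) * w)) /
      ((z:ℂ)^2 - (n:ℂ)^2) with hG
  have hderiv : ∀ w : ℂ, HasDerivAt G
      (Complex.exp (-(n:ℂ) * w * Complex.I) * Complex.cos ((z:ℂ) * w)) w := by
    intro w
    have h1 : HasDerivAt (fun w : ℂ => -(n:ℂ) * w * Complex.I) (-(n:ℂ) * Complex.I) w := by
      simpa using ((hasDerivAt_id w).const_mul (-(n:ℂ))).mul_const Complex.I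
    have hexp := h1.cexp
    have h2 : HasDerivAt (fun w : ℂ => (z:ℂ) * w) (z:ℂ) w := by
      simpa using (hasDerivAt_id w).const_mul (z:ℂ)
    have hcos := (h2.ccos).const_mul (-(n:ℂ) * Complex.I)
    have hsin := (h2.csin).const_mul (z:ℂ)
    have hmul := hexp.mul (hcos.add hsin)
    have := hmul.div_const ((z:ℂ)^2 - (n:ℂ)^2)
    refine this.congr_deriv ?_
    simp only [Pi.add_apply]
    field_simp
    ring_nf
    rw [Complex.I_sq]
    ring
  have hcont : Continuous (fun x : ℝ =>
      Complex.exp (-(n:ℂ) * x * Complex.I) * Complex.cos ((z:ℂ) * x)) := by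
    fun_prop
  have key := intervalIntegral.integral_eq_sub_of_hasDerivAt
    (a := -π) (b := π)
    (f := fun x : ℝ => G x)
    (f' := fun x : ℝ => Complex.exp (-(n:ℂ) * x * Complex.I) * Complex.cos ((z:ℂ) * x))
    (fun x _ => (hderiv x).comp_ofReal) (hcont.intervalIntegrable _ _)
  rw [key]
  simp only [hG]
  push_cast
  ring_nf
  simp only [Complex.cos_neg, Complex.sin_neg, mul_neg, neg_neg]
  ring

lemma neg_one_zpow_mul_self (n : ℤ) : ((-1:ℂ)^n) * ((-1:ℂ)^n) = 1 := by
  rw [← zpow_add₀ (by norm_num : (-1:ℂ) ≠ 0), show n + n = 2*n by ring, zpow_mul]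
  norm_num

lemma exp_n_pi_I (n : ℤ) : Complex.exp ((n:ℂ) * π * Complex.I) = (-1:ℂ)^n := by
  rw [mul_assoc, Complex.exp_int_mul, Complex.exp_pi_mul_I]

lemma exp_neg_n_pi_I (n : ℤ) : Complex.exp (-(n:ℂ) * π * Complex.I) = (-1:ℂ)^n := by
  have := exp_n_pi_I (-n)
  push_cast at this
  rw [this, zpow_neg]
  exact inv_eq_of_mul_eq_one_left (neg_one_zpow_mul_self n)

lemma cot_hasSum_int (z : ℝ) (h0 : 0 < z) (h1 : z < 1) :
    HasSum (fun n : ℤ => z * Real.sin (z*π) / (π * (z^2 - (n:ℝ)^2))) (Real.cos (z*π)) := by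
  haveI : Fact (0 < 2*π) := ⟨by positivity⟩
  set f₀ : ℝ → ℂ := fun x => Complex.cos ((z:ℂ)*x) with hf₀
  have hend : f₀ (-π) = f₀ (-π + 2*π) := by
    simp only [hf₀]
    rw [show ((-π + 2*π : ℝ) : ℂ) = (π:ℝ) by push_cast; ring,
      show ((z:ℂ) * ((-π : ℝ):ℂ)) = -((z:ℂ)*(π:ℝ)) by push_cast; ring, Complex.cos_neg]
  have hcont0 : Continuous f₀ := by fun_prop
  set f : C(AddCircle (2*π), ℂ) :=
    ⟨AddCircle.liftIco (2*π) (-π) f₀, AddCircle.liftIco_continuous hend hcont0.continuousOn⟩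
    with hf
  have hzn : ∀ n : ℤ, (z:ℂ)^2 - (n:ℂ)^2 ≠ 0 := by
    intro n
    rw [sub_ne_zero]
    intro heq
    have heq' : z^2 = ((n:ℝ))^2 := by exact_mod_cast heq
    rcases eq_or_ne n 0 with rfl | hn
    · simp at heq'; nlinarith
    · have h2 : (1:ℤ) ≤ |n| := Int.one_le_abs hn
      have h3 : (1:ℝ) ≤ |(n:ℝ)| := by exact_mod_cast (by push_cast at h2 ⊢; exact_mod_cast h2 : (1:ℝ) ≤ |(n:ℝ)|)
      have h4 := _root_.sq_abs ((n:ℝ))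
      nlinarith
  have hc : ∀ n : ℤ, fourierCoeff (⇑f) n
      = (-1:ℂ)^n * ((z:ℂ) * Complex.sin ((z:ℂ)*π)) / ((π:ℂ) * ((z:ℂ)^2 - (n:ℂ)^2)) := by
    intro n
    have h1' : (⇑f : AddCircle (2*π) → ℂ) = AddCircle.liftIco (2*π) (-π) f₀ := rfl
    rw [h1', fourierCoeff_liftIco_eq f₀ n, fourierCoeffOn_eq_integral]
    have hint : ∫ x in (-π:ℝ)..(-π + 2*π), (fourier (-n) (x : AddCircle ((-π + 2*π) - (-π)))) • f₀ x
        = ∫ x in (-π:ℝ)..π, Complex.exp (-(n:ℂ) * x * Complex.I) * Complex.cos ((z:ℂ) * x) := by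
      rw [show (-π + 2*π : ℝ) = π by ring]
      apply intervalIntegral.integral_congr
      intro x _
      dsimp only
      rw [smul_eq_mul]
      congr 1
      rw [fourier_coe_apply]
      congr 1
      rw [show (π - -π : ℝ) = 2*π by ring]
      have hπ : ((2*π : ℝ):ℂ) ≠ 0 := by
        exact_mod_cast mul_ne_zero two_ne_zero Real.pi_ne_zero
      rw [div_eq_iff hπ]
      push_cast
      ring
    rw [hint, key_integral z n (hzn n), exp_n_pi_I, exp_neg_n_pi_I]
    rw [show ((-π + 2*π) - (-π) : ℝ) = 2*π by ring]
    rw [real_smul]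
    have hπ : (π:ℂ) ≠ 0 := by exact_mod_cast Real.pi_ne_zero
    rw [eq_div_iff (mul_ne_zero hπ (hzn n))]
    push_cast
    field_simp [hzn n]
    ring
  -- norm of coefficients
  set K : ℝ := z * |Real.sin (z*π)| / π with hK
  have hKnn : 0 ≤ K := by
    apply div_nonneg _ Real.pi_pos.le
    exact mul_nonneg h0.le (abs_nonneg _)
  have hnorm : ∀ n : ℤ, ‖fourierCoeff (⇑f) n‖ = K / |z^2 - (n:ℝ)^2| := by
    intro n
    rw [hc n]
    have hcast : ((-1:ℂ)^n * ((z:ℂ) * Complex.sin ((z:ℂ)*π)) / ((π:ℂ) * ((z:ℂ)^2 - (n:ℂ)^2)))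
        = (-1:ℂ)^n * (((z * Real.sin (z*π) : ℝ)):ℂ) / (((π * (z^2 - (n:ℝ)^2) : ℝ)):ℂ) := by
      push_cast
      ring
    rw [hcast, norm_div, norm_mul, norm_zpow]
    simp only [norm_neg, norm_one, one_zpow, one_mul, Complex.norm_real, Real.norm_eq_abs]
    rw [abs_mul, abs_mul, abs_of_pos h0, abs_of_pos Real.pi_pos, hK]
    field_simp
  have hb : ∀ k : ℕ, K / |z^2 - ((k:ℝ)+1)^2| ≤ (K/(1-z^2)) * (1/((k:ℝ)+1)^2) := by
    intro k
    have hk1 : (1:ℝ) ≤ ((k:ℝ)+1) := by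
      have : (0:ℝ) ≤ (k:ℝ) := Nat.cast_nonneg k
      linarith
    have habs : |z^2 - ((k:ℝ)+1)^2| = ((k:ℝ)+1)^2 - z^2 := by
      rw [abs_of_nonpos] <;> nlinarith
    rw [habs]
    have hz2 : z^2 < 1 := by nlinarith [mul_pos (sub_pos.mpr h1) (by linarith : (0:ℝ) < 1 + z)]
    have hk2 : (1:ℝ) ≤ ((k:ℝ)+1)^2 := by nlinarith
    have hpos : (0:ℝ) < ((k:ℝ)+1)^2*(1-z^2) := by nlinarith
    have h6 : ((k:ℝ)+1)^2*(1-z^2) ≤ ((k:ℝ)+1)^2 - z^2 := by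
      nlinarith [mul_le_mul_of_nonneg_left hk2 (sq_nonneg z)]
    calc K / (((k:ℝ)+1)^2 - z^2) ≤ K / (((k:ℝ)+1)^2*(1-z^2)) :=
          div_le_div_of_nonneg_left hKnn hpos h6
      _ = (K/(1-z^2)) * (1/((k:ℝ)+1)^2) := by
          rw [div_mul_div_comm, mul_one, mul_comm ((1:ℝ)-z^2)]
  have hbase : Summable (fun k : ℕ => (K/(1-z^2)) * (1/((k:ℝ)+1)^2)) := by
    have h7 : Summable (fun k : ℕ => 1/((k:ℝ)+1)^2) := by
      have := (summable_nat_add_iff 1).mpr (summable_one_div_nat_pow.mpr (by norm_num : 2 ≤ 2))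
      refine this.congr fun k => ?_
      push_cast
      ring
    exact h7.mul_left _
  have hshift : Summable (fun k : ℕ => K / |z^2 - ((k:ℝ)+1)^2|) := by
    refine Summable.of_nonneg_of_le (fun k => by positivity) hb hbase
  have hsummable : Summable (fourierCoeff (⇑f)) := by
    apply Summable.of_norm
    have heq : (fun n : ℤ => ‖fourierCoeff (⇑f) n‖) = fun n : ℤ => K / |z^2 - (n:ℝ)^2| :=
      funext hnorm
    rw [heq]
    apply Summable.of_nat_of_neg_add_one
    · apply (_root_.summable_nat_add_iff 1).1
      refine hshift.congr fun k => ?_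
      push_cast
      ring_nf
    · refine hshift.congr fun k => ?_
      push_cast
      ring_nf
  -- pointwise sum at -π
  have hsum := has_pointwise_sum_fourier_series_of_summable hsummable (((-π : ℝ) : AddCircle (2*π)))
  have h2π : ((2*π : ℝ):ℂ) ≠ 0 := by exact_mod_cast mul_ne_zero two_ne_zero Real.pi_ne_zero
  have hfour : ∀ n : ℤ, fourier n (((-π:ℝ) : AddCircle (2*π))) = (-1:ℂ)^n := by
    intro n
    rw [fourier_coe_apply, ← exp_neg_n_pi_I n]
    congr 1
    rw [div_eq_iff h2π]
    push_cast
    ring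
  have hfval : f (((-π:ℝ) : AddCircle (2*π))) = ((Real.cos (z*π) : ℝ) : ℂ) := by
    show AddCircle.liftIco (2*π) (-π) f₀ (((-π:ℝ) : AddCircle (2*π))) = _
    rw [AddCircle.liftIco_coe_apply
      (Set.mem_Ico.mpr ⟨le_refl _, by nlinarith [Real.pi_pos]⟩)]
    simp only [hf₀]
    rw [show ((z:ℂ) * ((-π:ℝ):ℂ)) = -((z:ℂ)*((π:ℝ):ℂ)) by push_cast; ring, Complex.cos_neg]
    push_cast
    ring
  have hfun : (fun n : ℤ => fourierCoeff (⇑f) n • fourier n (((-π:ℝ) : AddCircle (2*π))))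
      = fun n : ℤ => (((z * Real.sin (z*π) / (π * (z^2 - (n:ℝ)^2)) : ℝ)) : ℂ) := by
    funext n
    rw [smul_eq_mul, hc n, hfour n]
    rw [div_mul_eq_mul_div, mul_comm ((-1:ℂ)^n) _, mul_assoc, neg_one_zpow_mul_self n, mul_one]
    push_cast
    ring
  rw [hfun, hfval] at hsum
  exact Complex.hasSum_ofReal.mp hsum


lemma cot_hasSum_nat (z : ℝ) (h0 : 0 < z) (h1 : z < 1) :
    HasSum (fun n : ℕ => 2*z^2/(z^2 - ((n:ℝ)+1)^2)) (π*z*Real.cot (π*z) - 1) := by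
  have hππ := Real.pi_pos
  have hs : 0 < Real.sin (z*π) :=
    Real.sin_pos_of_pos_of_lt_pi (by positivity) (by nlinarith)
  have h := (cot_hasSum_int z h0 h1).nat_add_neg
  have h3 := (hasSum_nat_add_iff' (f := fun n : ℕ =>
      z * Real.sin (z*π) / (π * (z^2 - ((n:ℕ):ℝ)^2)) + z * Real.sin (z*π) / (π * (z^2 - ((-(n:ℕ):ℤ):ℝ)^2))) 1).mpr h
  have h4 : HasSum (fun n : ℕ => 2*z*Real.sin (z*π)/(π*(z^2-((n:ℝ)+1)^2)))
      (Real.cos (z*π) - Real.sin (z*π)/(π*z)) := by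
    have hfn : (fun n : ℕ =>
        z * Real.sin (z*π) / (π * (z^2 - (((n+1:ℕ)):ℝ)^2)) + z * Real.sin (z*π) / (π * (z^2 - ((-((n+1:ℕ)):ℤ):ℝ)^2)))
        = fun n : ℕ => 2*z*Real.sin (z*π)/(π*(z^2-((n:ℝ)+1)^2)) := by
      funext n
      push_cast
      ring
    rw [hfn] at h3
    refine (congrArg (fun s => HasSum _ s) ?_).mpr h3
    simp only [Finset.sum_range_one]
    push_cast
    have hz : z ≠ 0 := ne_of_gt h0
    have hπ : π ≠ 0 := Real.pi_ne_zero
    field_simp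
    ring
  have h5 := h4.mul_left (π*z/Real.sin (z*π))
  have hfn2 : (fun n : ℕ => (π*z/Real.sin (z*π)) * (2*z*Real.sin (z*π)/(π*(z^2-((n:ℝ)+1)^2))))
      = fun n : ℕ => 2*z^2/(z^2 - ((n:ℝ)+1)^2) := by
    funext n
    have hden : z^2 - ((n:ℝ)+1)^2 ≠ 0 := by
      have hn1 : (1:ℝ) ≤ (n:ℝ)+1 := by
        have : (0:ℝ) ≤ (n:ℝ) := Nat.cast_nonneg n
        linarith
      nlinarith
    have hπ : π ≠ 0 := Real.pi_ne_zero
    have hs' : Real.sin (π*z) ≠ 0 := by rw [mul_comm]; exact hs.ne'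
    field_simp
  have hval2 : (π*z/Real.sin (z*π)) * (Real.cos (z*π) - Real.sin (z*π)/(π*z))
      = π*z*Real.cot (π*z) - 1 := by
    rw [Real.cot_eq_cos_div_sin, show Real.cos (π*z) = Real.cos (z*π) by rw [mul_comm],
      show Real.sin (π*z) = Real.sin (z*π) by rw [mul_comm]]
    have hz : z ≠ 0 := ne_of_gt h0
    have hπ : π ≠ 0 := Real.pi_ne_zero
    have hs' : Real.sin (π*z) ≠ 0 := by rw [mul_comm]; exact hs.ne'
    field_simp
  rw [hfn2, hval2] at h5
  exact h5

lemma aux_hasSum (a : ℕ) (ha : 0 < a) :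
    HasSum (fun n : ℕ => (1:ℝ)/((2*((n:ℝ)+1))^2 * (a:ℝ)^2 - 1))
      ((1 - π/(2*(a:ℝ)) * Real.cot (π/(2*(a:ℝ))))/2) := by
  have haR : (1:ℝ) ≤ (a:ℝ) := by exact_mod_cast ha
  have ha0 : (a:ℝ) ≠ 0 := by positivity
  set z : ℝ := 1/(2*(a:ℝ)) with hz
  have h0 : 0 < z := by positivity
  have h1 : z < 1 := by
    rw [hz, div_lt_one (by positivity)]
    linarith
  have h := (cot_hasSum_nat z h0 h1).mul_left (-(1/2))
  have hπz : π * z = π/(2*(a:ℝ)) := by rw [hz, mul_one_div]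
  have hfn : (fun n : ℕ => -(1/2) * (2*z^2/(z^2 - ((n:ℝ)+1)^2)))
      = fun n : ℕ => (1:ℝ)/((2*((n:ℝ)+1))^2 * (a:ℝ)^2 - 1) := by
    funext n
    have hn1 : (1:ℝ) ≤ (n:ℝ)+1 := by
      have : (0:ℝ) ≤ (n:ℝ) := Nat.cast_nonneg n
      linarith
    have hc2 : (1:ℝ) ≤ ((n:ℝ)+1)^2 := by nlinarith
    have ha2 : (1:ℝ) ≤ (a:ℝ)^2 := by nlinarith
    have hden : z^2 - ((n:ℝ)+1)^2 ≠ 0 := by nlinarith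
    have hden' : (1/(2*(a:ℝ)))^2 - ((n:ℝ)+1)^2 ≠ 0 := by rw [← hz]; exact hden
    have h4c : (4:ℝ) ≤ (2*((n:ℝ)+1))^2 := by nlinarith
    have hden2 : (2*((n:ℝ)+1))^2 * (a:ℝ)^2 - 1 ≠ 0 := by
      have : (0:ℝ) < (2*((n:ℝ)+1))^2 * (a:ℝ)^2 - 1 := by
        nlinarith [mul_le_mul h4c ha2 zero_le_one (by positivity : (0:ℝ) ≤ (2*((n:ℝ)+1))^2)]
      exact this.ne'
    have hz0 : z ≠ 0 := ne_of_gt h0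
    have key : z^2 - ((n:ℝ)+1)^2 = -(z^2) * ((2*((n:ℝ)+1))^2*(a:ℝ)^2 - 1) := by
      rw [hz]
      field_simp
      ring
    rw [key, div_mul_eq_div_div, div_neg, mul_div_assoc, div_self (pow_ne_zero 2 hz0), mul_one]
    ring
  have hval : -(1/2) * (π*z*Real.cot (π*z) - 1)
      = (1 - π/(2*(a:ℝ)) * Real.cot (π/(2*(a:ℝ))))/2 := by
    rw [hπz]
    ring
  rw [hfn, hval] at h
  exact h

theorem series_eq_cot_form (i j : ℕ) (hi : 0 < i) (hj : 0 < j) (hij : i ≠ j) :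
    (4 / Real.pi ^ 2) *
      (2 + ∑' m : ℕ,
        4 / (((2 * (m + 1) : ℝ) ^ 2 * ((i / Nat.gcd i j : ℕ) : ℝ) ^ 2 - 1) *
             ((2 * (m + 1) : ℝ) ^ 2 * ((j / Nat.gcd i j : ℕ) : ℝ) ^ 2 - 1)))
    = (8 / Real.pi ^ 2) *
      (((i / Nat.gcd i j : ℕ) : ℝ) ^ 2 /
          (((i / Nat.gcd i j : ℕ) : ℝ) ^ 2 - ((j / Nat.gcd i j : ℕ) : ℝ) ^ 2) *
        (Real.pi / (2 * ((i / Nat.gcd i j : ℕ) : ℝ))) *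
          Real.cot (Real.pi / (2 * ((i / Nat.gcd i j : ℕ) : ℝ)))
      - ((j / Nat.gcd i j : ℕ) : ℝ) ^ 2 /
          (((i / Nat.gcd i j : ℕ) : ℝ) ^ 2 - ((j / Nat.gcd i j : ℕ) : ℝ) ^ 2) *
        (Real.pi / (2 * ((j / Nat.gcd i j : ℕ) : ℝ))) *
          Real.cot (Real.pi / (2 * ((j / Nat.gcd i j : ℕ) : ℝ)))) := by
  set a : ℕ := i / Nat.gcd i j with hadef
  set b : ℕ := j / Nat.gcd i j with hbdef
  have hg : 0 < Nat.gcd i j := Nat.gcd_pos_of_pos_left j hi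
  have ha : 0 < a := Nat.div_pos (Nat.le_of_dvd hi (Nat.gcd_dvd_left i j)) hg
  have hb : 0 < b := Nat.div_pos (Nat.le_of_dvd hj (Nat.gcd_dvd_right i j)) hg
  have hab : a ≠ b := by
    intro h
    apply hij
    have h1' : i = a * Nat.gcd i j := (Nat.div_mul_cancel (Nat.gcd_dvd_left i j)).symm
    have h2' : j = b * Nat.gcd i j := (Nat.div_mul_cancel (Nat.gcd_dvd_right i j)).symm
    exact h1'.trans (by rw [h]; exact h2'.symm)
  have haR : (1:ℝ) ≤ (a:ℝ) := by exact_mod_cast ha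
  have hbR : (1:ℝ) ≤ (b:ℝ) := by exact_mod_cast hb
  have habR : (a:ℝ)^2 - (b:ℝ)^2 ≠ 0 := by
    intro h
    apply hab
    have h2 : ((a:ℝ) - b) * ((a:ℝ) + b) = 0 := by nlinarith
    rcases mul_eq_zero.mp h2 with h3 | h3
    · exact_mod_cast sub_eq_zero.mp h3
    · nlinarith
  have hA := aux_hasSum a ha
  have hB := aux_hasSum b hb
  have H := ((hB.mul_left ((b:ℝ)^2)).sub (hA.mul_left ((a:ℝ)^2))).mul_left (4/((a:ℝ)^2-(b:ℝ)^2))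
  have hfn : (fun n : ℕ => (4/((a:ℝ)^2-(b:ℝ)^2)) *
        ((b:ℝ)^2 * ((1:ℝ)/((2*((n:ℝ)+1))^2 * (b:ℝ)^2 - 1))
          - (a:ℝ)^2 * ((1:ℝ)/((2*((n:ℝ)+1))^2 * (a:ℝ)^2 - 1))))
      = fun n : ℕ => 4 / (((2 * ((n:ℝ) + 1)) ^ 2 * (a : ℝ) ^ 2 - 1) *
             ((2 * ((n:ℝ) + 1)) ^ 2 * (b : ℝ) ^ 2 - 1)) := by
    funext n
    have hn1 : (1:ℝ) ≤ (n:ℝ)+1 := by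
      have : (0:ℝ) ≤ (n:ℝ) := Nat.cast_nonneg n
      linarith
    have h4c : (4:ℝ) ≤ (2*((n:ℝ)+1))^2 := by nlinarith
    have ha2 : (1:ℝ) ≤ (a:ℝ)^2 := by nlinarith
    have hb2 : (1:ℝ) ≤ (b:ℝ)^2 := by nlinarith
    have h2nn : (0:ℝ) ≤ (2*((n:ℝ)+1))^2 := by positivity
    have hdenA : (2*((n:ℝ)+1))^2 * (a:ℝ)^2 - 1 ≠ 0 := by
      have : (0:ℝ) < (2*((n:ℝ)+1))^2 * (a:ℝ)^2 - 1 := by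
        nlinarith [mul_le_mul h4c ha2 zero_le_one h2nn]
      exact this.ne'
    have hdenB : (2*((n:ℝ)+1))^2 * (b:ℝ)^2 - 1 ≠ 0 := by
      have : (0:ℝ) < (2*((n:ℝ)+1))^2 * (b:ℝ)^2 - 1 := by
        nlinarith [mul_le_mul h4c hb2 zero_le_one h2nn]
      exact this.ne'
    rw [mul_one_div, mul_one_div, div_sub_div _ _ hdenB hdenA, div_mul_div_comm, div_eq_div_iff (mul_ne_zero habR (mul_ne_zero hdenB hdenA)) (mul_ne_zero hdenA hdenB)]
    ring
  rw [hfn] at H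
  have htsum : ∑' (m : ℕ), 4 / ((2 * ((m:ℝ) + 1)) ^ 2 * (a : ℝ) ^ 2 - 1)
        / ((2 * ((m:ℝ) + 1)) ^ 2 * (b : ℝ) ^ 2 - 1) = (4/((a:ℝ)^2-(b:ℝ)^2)) *
        ((b:ℝ)^2 * ((1 - π/(2*(b:ℝ)) * Real.cot (π/(2*(b:ℝ))))/2)
          - (a:ℝ)^2 * ((1 - π/(2*(a:ℝ)) * Real.cot (π/(2*(a:ℝ))))/2)) := by
    rw [← H.tsum_eq]
    apply tsum_congr
    intro m
    rw [div_div]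
  have hstmt : ∑' (m : ℕ), 4 / (((2 * ((m:ℝ) + 1)) ^ 2 * (a : ℝ) ^ 2 - 1) *
             ((2 * ((m:ℝ) + 1)) ^ 2 * (b : ℝ) ^ 2 - 1)) = (4/((a:ℝ)^2-(b:ℝ)^2)) *
        ((b:ℝ)^2 * ((1 - π/(2*(b:ℝ)) * Real.cot (π/(2*(b:ℝ))))/2)
          - (a:ℝ)^2 * ((1 - π/(2*(a:ℝ)) * Real.cot (π/(2*(a:ℝ))))/2)) := H.tsum_eq
  rw [hstmt]
  have hπ : π ≠ 0 := Real.pi_ne_zero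
  have ha0 : (a:ℝ) ≠ 0 := by positivity
  have hb0 : (b:ℝ) ≠ 0 := by positivity
  field_simp
  ring
end

section
/- Define √p_max^→(i,j) = (4/π²)·(2 + Σ_{m=2,4,...} 4/((m²𝐢²-1)(m²𝐣²-1))) with 𝐢 = i/gcd(i,j), 𝐣 = j/gcd(i,j). Then for all distinct positive integers i, j, we have √p_max^→(i,j) < 1. -/
set_option maxHeartbeats 1000000


noncomputable def sqrtPmaxSemi (i j : ℕ) : ℝ :=
  (4 / Real.pi ^ 2) *
    (2 + ∑' m : ℕ,
      4 / (((2 * (m + 1) : ℝ) ^ 2 * ((i / Nat.gcd i j : ℕ) : ℝ) ^ 2 - 1) *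
           ((2 * (m + 1) : ℝ) ^ 2 * ((j / Nat.gcd i j : ℕ) : ℝ) ^ 2 - 1)))

lemma basel_shift : HasSum (fun m : ℕ => (1 : ℝ) / ((m : ℝ) + 1) ^ 2) (Real.pi ^ 2 / 6) := by
  have h := hasSum_zeta_two
  have h2 := (hasSum_nat_add_iff' (f := fun n : ℕ => (1 : ℝ) / (n : ℝ) ^ 2) 1).mpr h
  simpa using h2

theorem sqrtPmaxSemi_lt_one (i j : ℕ) (hi : 0 < i) (hj : 0 < j) (hij : i ≠ j) :
    sqrtPmaxSemi i j < 1 := by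
  set g := Nat.gcd i j with hg
  have hg0 : 0 < g := Nat.gcd_pos_of_pos_left j hi
  set I := i / g with hI
  set J := j / g with hJ
  have hIpos : 0 < I := Nat.div_pos (Nat.le_of_dvd hi (Nat.gcd_dvd_left i j)) hg0
  have hJpos : 0 < J := Nat.div_pos (Nat.le_of_dvd hj (Nat.gcd_dvd_right i j)) hg0
  have hIJne : I ≠ J := by
    intro h
    apply hij
    have h1 : I * g = i := Nat.div_mul_cancel (Nat.gcd_dvd_left i j)
    have h2 : J * g = j := Nat.div_mul_cancel (Nat.gcd_dvd_right i j)
    rw [← h1, ← h2, h]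
  have hprod : 2 ≤ I * J := by
    have h2 : 2 ≤ I ∨ 2 ≤ J := by omega
    rcases h2 with h | h
    · calc 2 ≤ I := h
        _ = I * 1 := (mul_one I).symm
        _ ≤ I * J := Nat.mul_le_mul_left I hJpos
    · calc 2 ≤ J := h
        _ = 1 * J := (one_mul J).symm
        _ ≤ I * J := Nat.mul_le_mul_right J hIpos
  -- real versions
  have hIr : (1 : ℝ) ≤ (I : ℝ) := by exact_mod_cast hIpos
  have hJr : (1 : ℝ) ≤ (J : ℝ) := by exact_mod_cast hJpos
  have hIJr : (2 : ℝ) ≤ (I : ℝ) * (J : ℝ) := by exact_mod_cast hprod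
  set f : ℕ → ℝ := fun m =>
      4 / (((2 * (m + 1) : ℝ) ^ 2 * (I : ℝ) ^ 2 - 1) *
           ((2 * (m + 1) : ℝ) ^ 2 * (J : ℝ) ^ 2 - 1)) with hf
  have key : ∀ m : ℕ, (36 : ℝ) * ((m : ℝ) + 1) ^ 4 ≤
      ((2 * (m + 1) : ℝ) ^ 2 * (I : ℝ) ^ 2 - 1) *
      ((2 * (m + 1) : ℝ) ^ 2 * (J : ℝ) ^ 2 - 1) := by
    intro m
    have hm : (0 : ℝ) ≤ (m : ℝ) := Nat.cast_nonneg m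
    have hk : (1 : ℝ) ≤ (m : ℝ) + 1 := by linarith
    have hk2 : (1 : ℝ) ≤ ((m : ℝ) + 1) ^ 2 := by nlinarith
    have hA : 3 * ((m : ℝ) + 1) ^ 2 * (I : ℝ) ^ 2 ≤
        (2 * (m + 1) : ℝ) ^ 2 * (I : ℝ) ^ 2 - 1 := by
      have hI2 : (1 : ℝ) ≤ (I : ℝ) ^ 2 := by nlinarith
      nlinarith [mul_le_mul hk2 hI2 (by norm_num) (by linarith)]
    have hB : 3 * ((m : ℝ) + 1) ^ 2 * (J : ℝ) ^ 2 ≤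
        (2 * (m + 1) : ℝ) ^ 2 * (J : ℝ) ^ 2 - 1 := by
      have hJ2 : (1 : ℝ) ≤ (J : ℝ) ^ 2 := by nlinarith
      nlinarith [mul_le_mul hk2 hJ2 (by norm_num) (by linarith)]
    have hApos : (0 : ℝ) < 3 * ((m : ℝ) + 1) ^ 2 * (I : ℝ) ^ 2 := by positivity
    have hBpos : (0 : ℝ) ≤ 3 * ((m : ℝ) + 1) ^ 2 * (J : ℝ) ^ 2 := by positivity
    have hmul : (3 * ((m : ℝ) + 1) ^ 2 * (I : ℝ) ^ 2) *
        (3 * ((m : ℝ) + 1) ^ 2 * (J : ℝ) ^ 2) ≤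
        ((2 * (m + 1) : ℝ) ^ 2 * (I : ℝ) ^ 2 - 1) *
        ((2 * (m + 1) : ℝ) ^ 2 * (J : ℝ) ^ 2 - 1) :=
      mul_le_mul hA hB hBpos (by linarith)
    have hIJ2 : (4 : ℝ) ≤ ((I : ℝ) * (J : ℝ)) ^ 2 := by nlinarith
    nlinarith [sq_nonneg (((m : ℝ) + 1) ^ 2), hk2]
  have hdenpos : ∀ m : ℕ, (0 : ℝ) <
      ((2 * (m + 1) : ℝ) ^ 2 * (I : ℝ) ^ 2 - 1) *
      ((2 * (m + 1) : ℝ) ^ 2 * (J : ℝ) ^ 2 - 1) := by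
    intro m
    have hm : (0 : ℝ) ≤ (m : ℝ) := Nat.cast_nonneg m
    have h36 : (0 : ℝ) < 36 * ((m : ℝ) + 1) ^ 4 := by positivity
    exact lt_of_lt_of_le h36 (key m)
  have hfle : ∀ m : ℕ, f m ≤ (1 / 9) * (1 / ((m : ℝ) + 1) ^ 2) := by
    intro m
    have hm : (0 : ℝ) ≤ (m : ℝ) := Nat.cast_nonneg m
    have h36 : (0 : ℝ) < 36 * ((m : ℝ) + 1) ^ 4 := by positivity
    have h1 : f m ≤ 4 / (36 * ((m : ℝ) + 1) ^ 4) :=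
      div_le_div_of_nonneg_left (by norm_num) h36 (key m)
    refine h1.trans ?_
    have h36b : (0 : ℝ) < 36 * ((m : ℝ) + 1) ^ 2 := by positivity
    have hle : 36 * ((m : ℝ) + 1) ^ 2 ≤ 36 * ((m : ℝ) + 1) ^ 4 := by
      nlinarith [sq_nonneg ((m : ℝ) + 1), sq_nonneg (((m : ℝ) + 1) ^ 2 - 1)]
    have h2 : 4 / (36 * ((m : ℝ) + 1) ^ 4) ≤ 4 / (36 * ((m : ℝ) + 1) ^ 2) :=
      div_le_div_of_nonneg_left (by norm_num) h36b hle
    refine h2.trans_eq ?_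
    field_simp
    ring
  have hfnn : ∀ m : ℕ, 0 ≤ f m := by
    intro m
    have := hdenpos m
    positivity
  have hgsum : HasSum (fun m : ℕ => (1 / 9 : ℝ) * (1 / ((m : ℝ) + 1) ^ 2))
      ((1 / 9) * (Real.pi ^ 2 / 6)) := basel_shift.mul_left _
  have hfsummable : Summable f :=
    Summable.of_nonneg_of_le hfnn hfle hgsum.summable
  have hsumle : (∑' m, f m) ≤ (1 / 9) * (Real.pi ^ 2 / 6) := by
    rw [← hgsum.tsum_eq]
    exact Summable.tsum_le_tsum hfle hfsummable hgsum.summable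
  have hpi : (3.1415 : ℝ) < Real.pi := by
    have := Real.pi_gt_d6; linarith
  have hpi2 : (9.8 : ℝ) < Real.pi ^ 2 := by nlinarith
  have hpipos : (0 : ℝ) < Real.pi ^ 2 := by positivity
  show (4 / Real.pi ^ 2) * (2 + ∑' m, f m) < 1
  have hS : (2 : ℝ) + ∑' m, f m ≤ 2 + (1 / 9) * (Real.pi ^ 2 / 6) := by linarith
  have h4 : (0 : ℝ) < 4 / Real.pi ^ 2 := by positivity
  calc (4 / Real.pi ^ 2) * (2 + ∑' m, f m)
      ≤ (4 / Real.pi ^ 2) * (2 + (1 / 9) * (Real.pi ^ 2 / 6)) := by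
        exact mul_le_mul_of_nonneg_left hS h4.le
    _ < 1 := by
        rw [div_mul_eq_mul_div, div_lt_one hpipos]
        nlinarith
end

section
/- Let H be a Hermitian N×N matrix, p_max(i,j) = (Σ_k |⟨e_i,v_k⟩⟨v_k,e_j⟩|)² as in the ITC definition, and p_t(i,j) = |⟨e_i, e^{-itH}e_j⟩|². Then for any n ≥ 2 and any i, j, √p_max(i,j) ≤ Σ_{k_1,...,k_{n-2}=1}^N ∏_{l=1}^{n-1} √p_max(k_{l-1}, k_l), where k_0 = i and k_{n-1} = j. -/
open Finset

private def pS {N : ℕ} (f : Fin N → Fin N → ℝ) (m : ℕ) (i j : Fin N) : ℝ :=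
  ∑ k ∈ Finset.univ.filter
      (fun k : Fin (m + 2) → Fin N => k 0 = i ∧ k (Fin.last (m + 1)) = j),
    ∏ l : Fin (m + 1), f (k l.castSucc) (k l.succ)

private lemma pS_zero {N : ℕ} (f : Fin N → Fin N → ℝ) (i j : Fin N) :
    pS f 0 i j = f i j := by
  unfold pS
  rw [Finset.sum_filter]
  have h := Fintype.sum_equiv (finTwoArrowEquiv (Fin N))
    (fun k : Fin 2 → Fin N =>
      if k 0 = i ∧ k (Fin.last 1) = j then ∏ l : Fin 1, f (k l.castSucc) (k l.succ) else 0)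
    (fun p : Fin N × Fin N => if p.1 = i ∧ p.2 = j then f p.1 p.2 else 0)
    (fun k => by simp [finTwoArrowEquiv, Fin.last])
  rw [h, Fintype.sum_prod_type]
  simp [ite_and]

private lemma pS_succ {N : ℕ} (f : Fin N → Fin N → ℝ) (m : ℕ) (i j : Fin N) :
    pS f (m + 1) i j = ∑ b : Fin N, f i b * pS f m b j := by
  unfold pS
  simp_rw [Finset.sum_filter, Finset.mul_sum, mul_ite, mul_zero]
  have h := Fintype.sum_equiv (Fin.consEquiv (fun _ : Fin (m + 3) => Fin N))
    (fun p : Fin N × (Fin (m + 2) → Fin N) =>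
      if p.1 = i ∧ p.2 (Fin.last (m + 1)) = j then
        f p.1 (p.2 0) * ∏ l : Fin (m + 1), f (p.2 l.castSucc) (p.2 l.succ) else 0)
    (fun k : Fin (m + 3) → Fin N =>
      if k 0 = i ∧ k (Fin.last (m + 2)) = j then
        ∏ l : Fin (m + 2), f (k l.castSucc) (k l.succ) else 0)
    (fun ⟨a, k⟩ => by
      simp only [Fin.consEquiv_apply]
      have h1 : Fin.cons (α := fun _ => Fin N) a k 0 = a := rfl
      have h2 : Fin.cons (α := fun _ => Fin N) a k (Fin.last (m + 2)) = k (Fin.last (m + 1)) := by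
        rw [← Fin.succ_last, Fin.cons_succ]
      have h3 : ∏ l : Fin (m + 2),
          f (Fin.cons (α := fun _ => Fin N) a k l.castSucc)
            (Fin.cons (α := fun _ => Fin N) a k l.succ)
          = f a (k 0) * ∏ l : Fin (m + 1), f (k l.castSucc) (k l.succ) := by
        rw [Fin.prod_univ_succ]
        refine congrArg₂ (· * ·) rfl ?_
        refine Finset.prod_congr rfl fun l _ => ?_
        rw [← Fin.succ_castSucc l, Fin.cons_succ, Fin.cons_succ]
      rw [h1, h2, h3])
  rw [← h, Fintype.sum_prod_type]
  rw [Finset.sum_comm]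
  conv_rhs => rw [Finset.sum_comm]
  refine Finset.sum_congr rfl fun k _ => ?_
  simp [ite_and]

private lemma key_lemma {N : ℕ} (f : Fin N → Fin N → ℝ) (hf0 : ∀ a b, 0 ≤ f a b)
    (hres : ∀ a b, f a b ≤ ∑ c : Fin N, f a c * f c b) :
    ∀ m : ℕ, ∀ i j : Fin N, f i j ≤ pS f m i j := by
  intro m
  induction m with
  | zero => intro i j; rw [pS_zero]
  | succ m ih =>
    intro i j
    rw [pS_succ]
    calc f i j ≤ ∑ c : Fin N, f i c * f c j := hres i j
      _ ≤ ∑ c : Fin N, f i c * pS f m c j :=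
        Finset.sum_le_sum fun c _ => mul_le_mul_of_nonneg_left (ih c j) (hf0 i c)

private lemma resolution {N : ℕ} (v : Fin N → Fin N → ℂ)
    (horth : ∀ k l : Fin N, ∑ x : Fin N, star (v k x) * v l x = if k = l then 1 else 0)
    (a b : Fin N) :
    (∑ k : Fin N, ‖v k a * star (v k b)‖) ≤
      ∑ m : Fin N, (∑ k : Fin N, ‖v k a * star (v k m)‖) * (∑ k : Fin N, ‖v k m * star (v k b)‖) := by
  have hterm : ∀ (k c d : Fin N), ‖v k c * star (v k d)‖ = ‖v k c‖ * ‖v k d‖ := by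
    intro k c d; rw [norm_mul, norm_star]
  have hnorm1 : ∀ k : Fin N, (∑ m : Fin N, ‖v k m‖ ^ 2) = 1 := by
    intro k
    have h := horth k k
    simp at h
    have : ((∑ m : Fin N, ‖v k m‖ ^ 2 : ℝ) : ℂ) = ((1:ℝ):ℂ) := by
      push_cast
      rw [← h]
      refine Finset.sum_congr rfl fun x _ => ?_
      rw [← Complex.normSq_eq_conj_mul_self]
      rw [Complex.normSq_eq_norm_sq]
      push_cast; ring
    exact_mod_cast this
  calc (∑ k : Fin N, ‖v k a * star (v k b)‖)
      = ∑ k : Fin N, ∑ m : Fin N, (‖v k a‖ * ‖v k m‖) * (‖v k m‖ * ‖v k b‖) := by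
        refine Finset.sum_congr rfl fun k _ => ?_
        rw [hterm]
        have : ∑ m : Fin N, (‖v k a‖ * ‖v k m‖) * (‖v k m‖ * ‖v k b‖)
            = (‖v k a‖ * ‖v k b‖) * ∑ m : Fin N, ‖v k m‖ ^ 2 := by
          rw [Finset.mul_sum]; refine Finset.sum_congr rfl fun m _ => ?_; ring
        rw [this, hnorm1, mul_one]
    _ = ∑ m : Fin N, ∑ k : Fin N, (‖v k a‖ * ‖v k m‖) * (‖v k m‖ * ‖v k b‖) :=
        Finset.sum_comm
    _ ≤ ∑ m : Fin N, (∑ k : Fin N, ‖v k a * star (v k m)‖) * (∑ k : Fin N, ‖v k m * star (v k b)‖) := by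
        refine Finset.sum_le_sum fun m _ => ?_
        simp_rw [hterm]
        calc ∑ k : Fin N, (‖v k a‖ * ‖v k m‖) * (‖v k m‖ * ‖v k b‖)
            ≤ ∑ k : Fin N, (‖v k a‖ * ‖v k m‖) * ∑ k' : Fin N, (‖v k' m‖ * ‖v k' b‖) := by
              refine Finset.sum_le_sum fun k _ => ?_
              refine mul_le_mul_of_nonneg_left ?_ (by positivity)
              exact Finset.single_le_sum (f := fun k' => ‖v k' m‖ * ‖v k' b‖)
                (fun k' _ => by positivity) (Finset.mem_univ k)
          _ = (∑ k : Fin N, ‖v k a‖ * ‖v k m‖) * ∑ k' : Fin N, ‖v k' m‖ * ‖v k' b‖ := by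
              rw [Finset.sum_mul]

private lemma bridge {N : ℕ} (f : Fin N → Fin N → ℝ) (n : ℕ) (hn : 2 ≤ n) (i j : Fin N) :
    (∑ k ∈ Finset.univ.filter
        (fun k : Fin n → Fin N => k ⟨0, Nat.lt_of_lt_of_le Nat.zero_lt_two hn⟩ = i ∧
          k ⟨n - 1, Nat.sub_lt (Nat.lt_of_lt_of_le Nat.zero_lt_two hn) Nat.one_pos⟩ = j),
      ∏ l ∈ (Finset.range (n - 1)).attach,
        f (k ⟨l.1, Nat.lt_of_lt_of_le (Finset.mem_range.mp l.2) (Nat.sub_le n 1)⟩)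
          (k ⟨l.1 + 1, Nat.add_lt_of_lt_sub (Finset.mem_range.mp l.2)⟩))
    = pS f (n - 2) i j := by
  obtain ⟨m, rfl⟩ : ∃ m, n = m + 2 := ⟨n - 2, by omega⟩
  unfold pS
  have hfilter : (Finset.univ.filter
      (fun k : Fin (m + 2) → Fin N => k ⟨0, by omega⟩ = i ∧ k ⟨m + 2 - 1, by omega⟩ = j))
      = (Finset.univ.filter
      (fun k : Fin (m + 2 - 2 + 2) → Fin N => k 0 = i ∧ k (Fin.last (m + 2 - 2 + 1)) = j)) := by
    refine Finset.filter_congr fun k _ => ?_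
    have e0 : (⟨0, by omega⟩ : Fin (m + 2)) = (0 : Fin (m + 2 - 2 + 2)) :=
      Fin.ext (by simp)
    have e1 : (⟨m + 2 - 1, by omega⟩ : Fin (m + 2)) = Fin.last (m + 2 - 2 + 1) :=
      Fin.ext (by simp [Fin.val_last])
    rw [e0, e1]
  rw [hfilter]
  refine Finset.sum_congr rfl fun k _ => ?_
  refine Finset.prod_bij
    (fun (l : {x // x ∈ Finset.range (m + 2 - 1)}) _ =>
      (⟨l.1, Finset.mem_range.mp l.2⟩ : Fin (m + 2 - 2 + 1)))
    (fun _ _ => Finset.mem_univ _) ?_ ?_ ?_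
  · intro a ha b hb hab
    exact Subtype.ext (congrArg Fin.val hab)
  · intro b _
    exact ⟨⟨b.1, Finset.mem_range.mpr b.2⟩, Finset.mem_attach _ _, rfl⟩
  · intro a _
    rfl

open Matrix in
theorem pmax_path_integral {N : ℕ} (H : Matrix (Fin N) (Fin N) ℂ) (hH : H.IsHermitian)
    (v : Fin N → Fin N → ℂ) (lam : Fin N → ℝ)
    (heig : ∀ k : Fin N, H.mulVec (v k) = (lam k : ℂ) • v k)
    (horth : ∀ k l : Fin N,
      ∑ x : Fin N, star (v k x) * v l x = if k = l then 1 else 0)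
    (pmax : Fin N → Fin N → ℝ)
    (hpmax : ∀ i j, pmax i j = (∑ k : Fin N, ‖v k i * star (v k j)‖) ^ 2)
    (n : ℕ) (hn : 2 ≤ n) (i j : Fin N) :
    Real.sqrt (pmax i j) ≤
      ∑ k ∈ Finset.univ.filter
          (fun k : Fin n → Fin N => k ⟨0, by omega⟩ = i ∧ k ⟨n - 1, by omega⟩ = j),
        ∏ l ∈ (Finset.range (n - 1)).attach,
          Real.sqrt (pmax
            (k ⟨l.1, by have := Finset.mem_range.mp l.2; omega⟩)
            (k ⟨l.1 + 1, by have := Finset.mem_range.mp l.2; omega⟩)) := by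
  set f : Fin N → Fin N → ℝ := fun a b => Real.sqrt (pmax a b) with hf
  have hq : ∀ a b, f a b = ∑ k : Fin N, ‖v k a * star (v k b)‖ := by
    intro a b
    rw [hf]
    simp only [hpmax]
    exact Real.sqrt_sq (by positivity)
  have hf0 : ∀ a b, 0 ≤ f a b := fun a b => Real.sqrt_nonneg _
  have hres : ∀ a b, f a b ≤ ∑ c : Fin N, f a c * f c b := by
    intro a b
    simp_rw [hq]
    exact resolution v horth a b
  have hb := bridge f n hn i j
  simp only [hf] at hb
  rw [hb]
  exact key_lemma f hf0 hres (n - 2) i j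
end
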